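/- Let H be a complex separable Hilbert space and let M : ℂ₊ → B(H) be a Herglotz operator. If M(z₀) has a bounded inverse M(z₀)⁻¹ ∈ B(H) for some point z₀ in the open upper half-plane ℂ₊, then M(z) has a bounded inverse M(z)⁻¹ ∈ B(H) for every z ∈ ℂ₊. -/

import Mathlib

open Complex Filter MeasureTheory TopologicalSpace ContinuousLinearMap
open scoped InnerProductSpace Topology

noncomputable section

namespace SpectralShift

variable {H : Type*} [NormedAddCommGroup H] [InnerProductSpace ℂ H] [CompleteSpace H]

/-- The imaginary part `(T - T*)/(2i)` of a bounded operator. -/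
def imPart (T : H →L[ℂ] H) : H →L[ℂ] H :=
  ((2 * Complex.I)⁻¹ : ℂ) • (T - ContinuousLinearMap.adjoint T)

/-- An operator-valued Herglotz function: analytic on the open upper half-plane with
nonnegative imaginary part there. -/
def IsHerglotz (M : ℂ → H →L[ℂ] H) : Prop :=
  DifferentiableOn ℂ M {z : ℂ | 0 < z.im} ∧ ∀ z : ℂ, 0 < z.im → (imPart (M z)).IsPositive

/-- The integrand `(T + iλ)⁻¹ - (1 + iλ)⁻¹ I` in the integral representation of `log T`. -/
def logIntegrand (T : H →L[ℂ] H) (t : ℝ) : H →L[ℂ] H :=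
  Ring.inverse (T + ((t : ℂ) * Complex.I) • (1 : H →L[ℂ] H)) -
    (((1 : ℂ) + (t : ℂ) * Complex.I)⁻¹) • (1 : H →L[ℂ] H)

/-- `log T = -i ∫₀^∞ ((T + iλ)⁻¹ - (1 + iλ)⁻¹ I) dλ` as a norm-convergent improper
Riemann integral, for a dissipative boundedly invertible `T`. -/
def opLog (T : H →L[ℂ] H) : H →L[ℂ] H :=
  limUnder atTop (fun R : ℝ => (-Complex.I) • ∫ t in (0:ℝ)..R, logIntegrand T t)

/-- The logarithm `log S = (log S*)*` of an operator `S` with `-S` dissipative. -/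
def opLogAnti (T : H →L[ℂ] H) : H →L[ℂ] H :=
  ContinuousLinearMap.adjoint (opLog (ContinuousLinearMap.adjoint T))

/-- The logarithm of a Herglotz-type operator family on `ℂ ∖ ℝ`, using `log T` in the
upper half-plane and the convention `log S = (log S*)*` in the lower half-plane. -/
def logHerg (Φ : ℂ → H →L[ℂ] H) (z : ℂ) : H →L[ℂ] H :=
  if 0 < z.im then opLog (Φ z) else opLogAnti (Φ z)

/-- The logarithm of an anti-Herglotz-type operator family on `ℂ ∖ ℝ` (nonpositive
imaginary part in the upper half-plane). -/
def logAntiHerg (Φ : ℂ → H →L[ℂ] H) (z : ℂ) : H →L[ℂ] H :=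
  if 0 < z.im then opLogAnti (Φ z) else opLog (Φ z)

/-- Trace class: absolute summability of the diagonal in every Hilbert basis. -/
def IsTraceClass (T : H →L[ℂ] H) : Prop :=
  ∀ (w : Set H) (b : HilbertBasis w ℂ H), Summable fun i => ‖⟪(b i : H), T (b i)⟫_ℂ‖

/-- The trace, computed in a fixed Hilbert basis (basis-independent for trace
class operators). -/
def trH (T : H →L[ℂ] H) : ℂ :=
  ∑' i, ⟪((exists_hilbertBasis ℂ H).choose_spec.choose i : H),
    T ((exists_hilbertBasis ℂ H).choose_spec.choose i)⟫_ℂ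

/-- The trace norm, via duality with bounded operators (the correct value for trace
class operators). -/
def traceNorm (T : H →L[ℂ] H) : ℝ :=
  ⨆ B : {B : H →L[ℂ] H // ‖B‖ ≤ 1}, ‖trH (T * (B : H →L[ℂ] H))‖

/-- Hilbert-Schmidt operators. -/
def IsHilbertSchmidt (K : H →L[ℂ] H) : Prop :=
  ∀ (w : Set H) (b : HilbertBasis w ℂ H), Summable fun i => ‖K (b i)‖ ^ 2

/-- A (possibly unbounded) self-adjoint operator in `H`: a densely defined symmetric
operator possessing everywhere-defined bounded resolvents at every non-real point. -/
structure SelfAdjointOp (H : Type*) [NormedAddCommGroup H] [InnerProductSpace ℂ H]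
    [CompleteSpace H] where
  dom : Submodule ℂ H
  dense_dom : Dense (dom : Set H)
  op : dom →ₗ[ℂ] H
  symmetric : ∀ x y : dom, ⟪op x, (y : H)⟫_ℂ = ⟪(x : H), op y⟫_ℂ
  resolvent : ℂ → H →L[ℂ] H
  resolvent_mem : ∀ {z : ℂ}, z.im ≠ 0 → ∀ x : H, resolvent z x ∈ dom
  op_resolvent : ∀ {z : ℂ} (hz : z.im ≠ 0) (x : H),
    op ⟨resolvent z x, resolvent_mem hz x⟩ - z • resolvent z x = x
  resolvent_op : ∀ {z : ℂ} (hz : z.im ≠ 0) (x : dom),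
    resolvent z (op x - z • (x : H)) = x

/-- `B = A + V` for a bounded operator `V` (with `dom B = dom A`). -/
def IsSumOf (B A : SelfAdjointOp H) (V : H →L[ℂ] H) : Prop :=
  B.dom = A.dom ∧ ∀ (x : H) (hxB : x ∈ B.dom) (hxA : x ∈ A.dom),
    B.op ⟨x, hxB⟩ = A.op ⟨x, hxA⟩ + V x

/-- `R` is the (bounded, everywhere defined) resolvent `(A - z)⁻¹` of `A` at `z`. -/
def SelfAdjointOp.IsResolventAt (A : SelfAdjointOp H) (z : ℂ) (R : H →L[ℂ] H) : Prop :=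
  (∀ x : H, R x ∈ A.dom) ∧
  (∀ (x : H) (hx : R x ∈ A.dom), A.op ⟨R x, hx⟩ - z • R x = x) ∧
  (∀ x : A.dom, R (A.op x - z • (x : H)) = x)

/-- `E` is the projection-valued spectral measure of the self-adjoint operator `A`. -/
def IsSpectralMeasure (A : SelfAdjointOp H) (E : Set ℝ → H →L[ℂ] H) : Prop :=
  (∀ B : Set ℝ, MeasurableSet B → IsSelfAdjoint (E B)) ∧
  (∀ B C : Set ℝ, MeasurableSet B → MeasurableSet C → E B * E C = E (B ∩ C)) ∧
  (E Set.univ = 1) ∧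
  (∀ (f : ℕ → Set ℝ), (∀ n, MeasurableSet (f n)) → Pairwise (Function.onFun Disjoint f) →
    ∀ x : H, HasSum (fun n => E (f n) x) (E (⋃ n, f n) x)) ∧
  ∃ μ : H → Measure ℝ,
    (∀ (f : H) (B : Set ℝ), MeasurableSet B → μ f B = ENNReal.ofReal (⟪f, E B f⟫_ℂ).re) ∧
    ∀ (z : ℂ), z.im ≠ 0 → ∀ f : H,
      ⟪f, A.resolvent z f⟫_ℂ = ∫ l : ℝ, ((l : ℂ) - z)⁻¹ ∂(μ f)

/-- Invertibility of `T` restricted to the range of the orthogonal projection `P`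
(for `T` commuting with `P`), with inverse `S` supported in `ran P`. -/
def InvertibleOn (T P : H →L[ℂ] H) : Prop :=
  ∃ S : H →L[ℂ] H, S * P = S ∧ P * S = S ∧ S * (T * P) = P ∧ (P * T) * S = P

/-- The spectral projection `J₊ = (I + J)/2` onto `H₊` for a self-adjoint unitary `J`. -/
def Jplus (J : H →L[ℂ] H) : H →L[ℂ] H := ((2 : ℂ)⁻¹) • (1 + J)

/-- The spectral projection `J₋ = (I - J)/2` onto `H₋` for a self-adjoint unitary `J`. -/
def Jminus (J : H →L[ℂ] H) : H →L[ℂ] H := ((2 : ℂ)⁻¹) • (1 - J)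

/-- `Φ₊(z) = I + J₊ K* (H₀ - z)⁻¹ K J₊`, the operator on `H` inducing `Φ₊(z)` on `H₊`
(and the identity on `H₋`). -/
def PhiPlus (H0 : SelfAdjointOp H) (J K : H →L[ℂ] H) (z : ℂ) : H →L[ℂ] H :=
  1 + Jplus J * (ContinuousLinearMap.adjoint K * H0.resolvent z * K) * Jplus J

/-- `Φ̃₋(z) = I - J₋ K* (H₊ - z)⁻¹ K J₋`, the operator on `H` inducing `Φ̃₋(z)` on `H₋`
(and the identity on `H₊`). -/
def PhiMinusT (Hp : SelfAdjointOp H) (J K : H →L[ℂ] H) (z : ℂ) : H →L[ℂ] H :=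
  1 - Jminus J * (ContinuousLinearMap.adjoint K * Hp.resolvent z * K) * Jminus J

section Aux
open ComplexConjugate


/-- key pointwise inequality: if `0 ≤ u.re` and `0 ≤ v.re` then `|u - v| ≤ |u + conj v|`. -/
lemma abs_sub_le_abs_add_conj {u v : ℂ} (hu : 0 ≤ u.re) (hv : 0 ≤ v.re) :
    ‖u - v‖ ≤ ‖u + conj v‖ := by
  rw [Complex.norm_def, Complex.norm_def]
  apply Real.sqrt_le_sqrt
  simp only [Complex.normSq_apply, Complex.sub_re, Complex.sub_im, Complex.add_re,
    Complex.add_im, Complex.conj_re, Complex.conj_im]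
  nlinarith

/-- The Cayley-type map `w ↦ (z₁ - conj z₁ * w)/(1 - w)` sends the unit disk into `ℂ₊`. -/
lemma cayley_mapsTo {z₁ : ℂ} (h₁ : 0 < z₁.im) {w : ℂ} (hw : ‖w‖ < 1) :
    0 < ((z₁ - conj z₁ * w) / (1 - w)).im := by
  have hw1 : (1 : ℂ) - w ≠ 0 := by
    intro h
    have : w = 1 := by linear_combination -h
    rw [this] at hw; simp at hw
  have hns : Complex.normSq (1 - w) ≠ 0 := by
    simpa [Complex.normSq_eq_zero] using hw1
  have hnspos : 0 < Complex.normSq (1 - w) := by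
    rcases lt_or_eq_of_le (Complex.normSq_nonneg (1 - w)) with h | h
    · exact h
    · exact absurd h.symm hns
  have hwsq : w.re ^ 2 + w.im ^ 2 < 1 := by
    have := Complex.sq_norm w
    nlinarith [Complex.normSq_apply w, norm_nonneg w]
  rw [Complex.div_im]
  rw [div_sub_div_same]
  apply div_pos _ hnspos
  have : (z₁ - conj z₁ * w).im * (1 - w).re - (z₁ - conj z₁ * w).re * (1 - w).im
      = z₁.im * (1 - (w.re ^ 2 + w.im ^ 2)) := by
    simp only [Complex.sub_im, Complex.sub_re, Complex.mul_im, Complex.mul_re,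
      Complex.conj_re, Complex.conj_im, Complex.one_re, Complex.one_im]
    ring
  rw [this]
  nlinarith

section Harnack
/-- Harnack-type estimate for analytic functions on the upper half-plane with
nonnegative real part. -/
lemma halfplane_harnack (z₀ z₁ : ℂ) (h₀ : 0 < z₀.im) (h₁ : 0 < z₁.im) :
    ∃ C : ℝ, 0 < C ∧ ∀ h : ℂ → ℂ, DifferentiableOn ℂ h {z : ℂ | 0 < z.im} →
      (∀ z : ℂ, 0 < z.im → 0 ≤ (h z).re) →
      ‖h z₀‖ ≤ C * ‖h z₁‖ := by
  have hden : z₀ - conj z₁ ≠ 0 := by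
    intro h
    have := congrArg Complex.im h
    simp only [Complex.sub_im, Complex.conj_im, Complex.zero_im] at this
    linarith
  set w₀ : ℂ := (z₀ - z₁) / (z₀ - conj z₁) with hw₀def
  have habspos : 0 < ‖z₀ - conj z₁‖ := norm_pos_iff.mpr hden
  have hk : ‖w₀‖ < 1 := by
    rw [hw₀def, norm_div, div_lt_one habspos]
    rw [Complex.norm_def, Complex.norm_def]
    apply Real.sqrt_lt_sqrt (Complex.normSq_nonneg _)
    simp only [Complex.normSq_apply, Complex.sub_re, Complex.sub_im, Complex.conj_re,
      Complex.conj_im]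
    nlinarith
  set k := ‖w₀‖ with hkdef
  have hknn : 0 ≤ k := norm_nonneg w₀
  have h1k : 0 < 1 - k := by linarith
  refine ⟨(1 + k) / (1 - k), div_pos (by linarith) h1k, ?_⟩
  intro h hdiff hre
  set C := (1 + k) / (1 - k) with hCdef
  have hCge : 1 ≤ C := by
    rw [hCdef, le_div_iff₀ h1k]; linarith
  have main : ∀ ε : ℝ, 0 < ε →
      ‖h z₀ + ε‖ ≤ C * ‖h z₁ + ε‖ := by
    intro ε hε
    set a : ℂ := h z₁ + ε with hadef
    have hare : ε ≤ a.re := by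
      have := hre z₁ h₁
      simp only [hadef, Complex.add_re, Complex.ofReal_re]
      linarith
    set φ : ℂ → ℂ := fun z => (h z + ε - a) / (h z + ε + conj a) with hφdef
    have hφden : ∀ z : ℂ, 0 < z.im → 0 < (h z + (ε : ℂ) + conj a).re := by
      intro z hz
      have := hre z hz
      simp only [Complex.add_re, Complex.ofReal_re, Complex.conj_re]
      linarith
    have hφden' : ∀ z : ℂ, 0 < z.im → h z + (ε : ℂ) + conj a ≠ 0 := by
      intro z hz h0
      have := hφden z hz
      rw [h0] at this
      simp at this
    have hφabs : ∀ z : ℂ, 0 < z.im → ‖φ z‖ ≤ 1 := by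
      intro z hz
      rw [hφdef]
      simp only
      rw [norm_div, div_le_one (norm_pos_iff.mpr (hφden' z hz))]
      apply abs_sub_le_abs_add_conj
      · simp only [Complex.add_re, Complex.ofReal_re]
        have := hre z hz; linarith
      · linarith
    have hφdiff : DifferentiableOn ℂ φ {z : ℂ | 0 < z.im} := by
      apply DifferentiableOn.div
      · exact (hdiff.add_const _).sub_const _
      · exact (hdiff.add_const _).add_const _
      · exact fun z hz => hφden' z hz
    set c : ℂ → ℂ := fun w => (z₁ - conj z₁ * w) / (1 - w) with hcdef
    have hball : ∀ w : ℂ, w ∈ Metric.ball (0 : ℂ) 1 → ‖w‖ < 1 := by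
      intro w hw
      simpa [Metric.mem_ball, dist_zero_right] using hw
    have hball' : ∀ w : ℂ, w ∈ Metric.ball (0 : ℂ) 1 → (1 : ℂ) - w ≠ 0 := by
      intro w hw h0
      have : w = 1 := by linear_combination -h0
      rw [this] at hw
      simp [Metric.mem_ball] at hw
    have hcmaps : Set.MapsTo c (Metric.ball (0 : ℂ) 1) {z : ℂ | 0 < z.im} := by
      intro w hw
      exact cayley_mapsTo h₁ (hball w hw)
    have hcdiffon : DifferentiableOn ℂ c (Metric.ball (0 : ℂ) 1) := by
      apply DifferentiableOn.div
      · exact (differentiableOn_const _).sub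
          ((differentiable_id.const_mul _).differentiableOn)
      · exact (differentiableOn_const _).sub differentiable_id.differentiableOn
      · exact hball'
    set g : ℂ → ℂ := fun w => φ (c w) with hgdef
    have hgdiff : DifferentiableOn ℂ g (Metric.ball (0 : ℂ) 1) :=
      hφdiff.comp hcdiffon hcmaps
    have hc0 : c 0 = z₁ := by
      rw [hcdef]; simp
    have hg0 : g 0 = 0 := by
      rw [hgdef]
      simp only [hc0]
      rw [hφdef]
      simp [hadef]
    have hw₀mem : w₀ ∈ Metric.ball (0 : ℂ) 1 := by
      simpa [Metric.mem_ball, dist_zero_right] using hk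
    have h1w₀ : (1 : ℂ) - w₀ ≠ 0 := hball' w₀ hw₀mem
    have hcw₀ : c w₀ = z₀ := by
      rw [hcdef]
      simp only
      rw [div_eq_iff h1w₀, hw₀def]
      field_simp
      ring
    have hgw₀ : ‖g w₀‖ ≤ k := by
      have hδa : ∀ δ : ℝ, 0 < δ → ‖g w₀‖ ≤ (1 + δ) * k := by
        intro δ hδ
        have hmaps : Set.MapsTo g (Metric.ball (0 : ℂ) 1) (Metric.ball (g 0) (1 + δ)) := by
          intro w hw
          rw [Metric.mem_ball, hg0, dist_zero_right]
          calc ‖g w‖ ≤ 1 := hφabs (c w) (hcmaps hw)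
          _ < 1 + δ := by linarith
        have := Complex.dist_le_div_mul_dist_of_mapsTo_ball hgdiff (hmaps.mono_right Metric.ball_subset_closedBall) hw₀mem
        rw [hg0, dist_zero_right, dist_zero_right,
          div_one] at this
        exact this
      apply le_of_forall_pos_le_add
      intro δ hδ
      rcases eq_or_lt_of_le hknn with hk0 | hkpos
      · have := hδa 1 one_pos
        rw [← hk0] at this ⊢
        simpa using this.trans (by linarith)
      · have := hδa (δ / k) (div_pos hδ hkpos)
        calc ‖g w₀‖ ≤ (1 + δ / k) * k := this
        _ = k + δ := by field_simp
    have hφz₀ : ‖φ z₀‖ ≤ k := by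
      rw [← hcw₀]; exact hgw₀
    -- algebra: (h z₀ + ε) * (1 - φ z₀) = a + φ z₀ * conj a
    have hD : h z₀ + (ε : ℂ) + conj a ≠ 0 := hφden' z₀ h₀
    have hpd : φ z₀ * (h z₀ + (ε : ℂ) + conj a) = h z₀ + (ε : ℂ) - a := by
      rw [hφdef]
      simp only
      rw [div_mul_cancel₀ _ hD]
    have hid : (h z₀ + (ε : ℂ)) * (1 - φ z₀) = a + φ z₀ * conj a := by
      linear_combination -hpd
    have h1p : 1 - k ≤ ‖1 - φ z₀‖ := by
      have h' := norm_sub_norm_le (1 : ℂ) (φ z₀)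
      simp only [norm_one] at h'
      linarith [hφz₀]
    have habs : ‖h z₀ + (ε : ℂ)‖ * ‖1 - φ z₀‖
        ≤ (1 + k) * ‖a‖ := by
      rw [← norm_mul, hid]
      calc ‖a + φ z₀ * conj a‖
          ≤ ‖a‖ + ‖φ z₀ * conj a‖ := norm_add_le _ _
      _ = ‖a‖ + ‖φ z₀‖ * ‖a‖ := by
          rw [norm_mul, Complex.norm_conj]
      _ ≤ (1 + k) * ‖a‖ := by nlinarith [norm_nonneg a, hφz₀]
    have : ‖h z₀ + (ε : ℂ)‖ * (1 - k) ≤ (1 + k) * ‖a‖ := by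
      calc ‖h z₀ + (ε : ℂ)‖ * (1 - k)
          ≤ ‖h z₀ + (ε : ℂ)‖ * ‖1 - φ z₀‖ := by
            apply mul_le_mul_of_nonneg_left h1p (norm_nonneg _)
      _ ≤ (1 + k) * ‖a‖ := habs
    rw [hCdef, div_mul_eq_mul_div, le_div_iff₀ h1k]
    calc ‖h z₀ + ↑ε‖ * (1 - k) ≤ (1 + k) * ‖a‖ := this
    _ = (1 + k) * ‖h z₁ + ↑ε‖ := by rw [hadef]
  -- pass to the limit ε → 0
  apply le_of_forall_pos_le_add
  intro ε' hε'
  have hCpos : 0 < C + 1 := by linarith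
  set ε := ε' / (C + 1) with hεdef
  have hε : 0 < ε := div_pos hε' hCpos
  have h1 : ‖h z₀‖ ≤ ‖h z₀ + ε‖ + ε := by
    calc ‖h z₀‖ = ‖(h z₀ + ε) + (-ε : ℝ)‖ := by
          congr 1; push_cast; ring
    _ ≤ ‖h z₀ + ε‖ + ‖((-ε : ℝ) : ℂ)‖ := norm_add_le _ _
    _ = ‖h z₀ + ε‖ + ε := by
          rw [Complex.norm_real, Real.norm_eq_abs, abs_of_neg (by linarith : -ε < 0)]; ring_nf
  have h2 : ‖h z₁ + ε‖ ≤ ‖h z₁‖ + ε := by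
    calc ‖h z₁ + ε‖ ≤ ‖h z₁‖ + ‖((ε : ℝ) : ℂ)‖ :=
          norm_add_le _ _
    _ = ‖h z₁‖ + ε := by rw [Complex.norm_real, Real.norm_eq_abs, abs_of_pos hε]
  calc ‖h z₀‖ ≤ ‖h z₀ + ε‖ + ε := h1
  _ ≤ C * ‖h z₁ + ε‖ + ε := by linarith [main ε hε]
  _ ≤ C * (‖h z₁‖ + ε) + ε := by nlinarith [h2, hCge]
  _ = C * ‖h z₁‖ + ε * (C + 1) := by ring
  _ = C * ‖h z₁‖ + ε' := by
      rw [hεdef]; field_simp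
end Harnack

lemma im_inner_nonneg {T : H →L[ℂ] H} (hT : (imPart T).IsPositive) (x : H) :
    0 ≤ (⟪x, T x⟫_ℂ).im := by
  have key : ∀ a : ℂ, ((2 * Complex.I)⁻¹ : ℂ) * (conj a - a) = (((conj a).im : ℝ) : ℂ) := by
    intro a
    have h2i : (2 * Complex.I) ≠ 0 := by simp [Complex.I_ne_zero]
    have him : ((conj a).im : ℝ) = -a.im := by simp
    rw [him, show (conj a - a) = -(a - conj a) from by ring, Complex.sub_conj,
      inv_mul_eq_div, div_eq_iff h2i]
    push_cast
    ring
  have h1 : ⟪x, imPart T x⟫_ℂ = (((⟪x, T x⟫_ℂ).im : ℝ) : ℂ) := by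
    simp only [imPart, ContinuousLinearMap.smul_apply, ContinuousLinearMap.sub_apply,
      inner_smul_right, inner_sub_right, ContinuousLinearMap.adjoint_inner_right,
      ← inner_conj_symm x (T x)]
    exact key _
  have h2 := hT.2 x
  rw [ContinuousLinearMap.reApplyInnerSelf] at h2
  have h3 : ⟪imPart T x, x⟫_ℂ = (((⟪x, T x⟫_ℂ).im : ℝ) : ℂ) := by
    rw [← inner_conj_symm (imPart T x) x, h1, Complex.conj_ofReal]
  rw [h3] at h2
  simpa using h2

lemma isUnit_of_bddBelow (T : H →L[ℂ] H) (c : ℝ) (hc : 0 < c)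
    (h1 : ∀ x, c * ‖x‖ ≤ ‖T x‖)
    (h2 : ∀ x, c * ‖x‖ ≤ ‖ContinuousLinearMap.adjoint T x‖) :
    IsUnit T := by
  have hker : T.ker = ⊥ := by
    rw [LinearMap.ker_eq_bot']
    intro x hx
    have hx1 := h1 x
    rw [show T x = 0 from hx, norm_zero] at hx1
    have : ‖x‖ ≤ 0 := by nlinarith [norm_nonneg x]
    exact norm_le_zero_iff.mp this
  have hanti : AntilipschitzWith (⟨c, hc.le⟩ : NNReal)⁻¹ T := by
    apply AddMonoidHomClass.antilipschitz_of_bound (f := T)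
    intro x
    show ‖x‖ ≤ c⁻¹ * ‖T x‖
    rw [le_inv_mul_iff₀ hc]
    exact h1 x
  have hclosed : IsClosed (T.range : Set H) := by
    have := hanti.isClosed_range T.uniformContinuous
    simpa [Set.range, LinearMap.coe_range] using this
  haveI : CompleteSpace T.range := hclosed.completeSpace_coe
  have hrange : T.range = ⊤ := by
    rw [← Submodule.orthogonal_eq_bot_iff]
    rw [Submodule.eq_bot_iff]
    intro y hy
    have hTy : ContinuousLinearMap.adjoint T y = 0 := by
      have h0 : ⟪ContinuousLinearMap.adjoint T y, ContinuousLinearMap.adjoint T y⟫_ℂ = 0 := by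
        rw [ContinuousLinearMap.adjoint_inner_left]
        have : T (ContinuousLinearMap.adjoint T y) ∈ T.range :=
          LinearMap.mem_range_self _ _
        exact (Submodule.mem_orthogonal' _ _ |>.mp hy) _ this
      exact inner_self_eq_zero.mp h0
    have := h2 y
    rw [hTy, norm_zero] at this
    have : ‖y‖ ≤ 0 := by nlinarith [norm_nonneg y]
    exact norm_le_zero_iff.mp this
  let e := ContinuousLinearEquiv.ofBijective T hker hrange
  refine ⟨⟨T, (e.symm : H →L[ℂ] H), ?_, ?_⟩, rfl⟩
  · ext x
    simp only [ContinuousLinearMap.mul_apply, ContinuousLinearMap.one_apply,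
      ContinuousLinearMap.coe_coe]
    exact e.apply_symm_apply x
  · ext x
    simp only [ContinuousLinearMap.mul_apply, ContinuousLinearMap.one_apply,
      ContinuousLinearMap.coe_coe]
    exact e.symm_apply_apply x

lemma isUnit_of_inner_lower (A : H →L[ℂ] H) (c : ℝ) (hc : 0 < c)
    (h : ∀ x : H, c * ‖x‖ ^ 2 ≤ ‖⟪x, A x⟫_ℂ‖) : IsUnit A := by
  have key : ∀ (B : H →L[ℂ] H), (∀ x, c * ‖x‖ ^ 2 ≤ ‖⟪x, B x⟫_ℂ‖) →
      ∀ x, c * ‖x‖ ≤ ‖B x‖ := by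
    intro B hB x
    rcases eq_or_ne x 0 with rfl | hx
    · simp
    · have h1 := hB x
      have h2 : ‖⟪x, B x⟫_ℂ‖ ≤ ‖x‖ * ‖B x‖ := by
        exact norm_inner_le_norm x (B x)
      have hxpos : 0 < ‖x‖ := norm_pos_iff.mpr hx
      nlinarith
  refine isUnit_of_bddBelow A c hc (key A h) (key _ ?_)
  intro x
  have heq : ⟪x, ContinuousLinearMap.adjoint A x⟫_ℂ = conj ⟪x, A x⟫_ℂ := by
    rw [ContinuousLinearMap.adjoint_inner_right, inner_conj_symm]
  rw [heq, Complex.norm_conj]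
  exact h x

end Aux

/-- Lemma 2.3: if an operator-valued Herglotz function is boundedly invertible at one
point of the open upper half-plane, it is boundedly invertible everywhere on it. -/
theorem herglotz_isUnit_of_isUnit [SeparableSpace H]
    (M : ℂ → H →L[ℂ] H) (hM : IsHerglotz M)
    (z₀ : ℂ) (hz₀ : 0 < z₀.im) (hM₀ : IsUnit (M z₀)) :
    ∀ z : ℂ, 0 < z.im → IsUnit (M z) := by
  obtain ⟨hMd, hMpos⟩ := hM
  have hopen : IsOpen {w : ℂ | 0 < w.im} := isOpen_lt continuous_const Complex.continuous_im
  -- `M z + i` is boundedly invertible for every `z ∈ ℂ₊`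
  have hinner : ∀ z : ℂ, 0 < z.im → ∀ x : H,
      (‖x‖ : ℝ) ^ 2 ≤ ‖⟪x, (M z + Complex.I • 1) x⟫_ℂ‖ := by
    intro z hz x
    have h1 : ⟪x, (M z + Complex.I • 1) x⟫_ℂ = ⟪x, M z x⟫_ℂ + Complex.I * (‖x‖ : ℂ) ^ 2 := by
      simp only [ContinuousLinearMap.add_apply, ContinuousLinearMap.smul_apply,
        ContinuousLinearMap.one_apply, inner_add_right, inner_smul_right,
        inner_self_eq_norm_sq_to_K]
      norm_cast
    have hkey : (Complex.I * (‖x‖ : ℂ) ^ 2).im = ‖x‖ ^ 2 := by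
      simp [Complex.mul_im, ← Complex.ofReal_pow]
    have h2 : (‖x‖ : ℝ) ^ 2 ≤ (⟪x, (M z + Complex.I • 1) x⟫_ℂ).im := by
      rw [h1, Complex.add_im, hkey]
      linarith [im_inner_nonneg (hMpos z hz) x]
    exact h2.trans (Complex.im_le_norm _)
  have hTunit : ∀ z : ℂ, 0 < z.im → IsUnit (M z + Complex.I • 1) := by
    intro z hz
    exact isUnit_of_inner_lower _ 1 one_pos (by simpa using hinner z hz)
  set Ti : ℂ → H →L[ℂ] H := fun z => Ring.inverse (M z + Complex.I • 1) with hTidef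
  have hTi1 : ∀ z : ℂ, 0 < z.im → (M z + Complex.I • 1) * Ti z = 1 := fun z hz =>
    Ring.mul_inverse_cancel _ (hTunit z hz)
  have hTi2 : ∀ z : ℂ, 0 < z.im → Ti z * (M z + Complex.I • 1) = 1 := fun z hz =>
    Ring.inverse_mul_cancel _ (hTunit z hz)
  set W : ℂ → H →L[ℂ] H := fun z => (M z - Complex.I • 1) * Ti z with hWdef
  -- `W z` is a contraction
  have hWnorm : ∀ z : ℂ, 0 < z.im → ∀ x : H, ‖W z x‖ ≤ ‖x‖ := by
    intro z hz x
    set y := Ti z x with hydef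
    have hx : x = M z y + Complex.I • y := by
      have h0 := congrArg (fun A : H →L[ℂ] H => A x) (hTi1 z hz)
      simp only [ContinuousLinearMap.mul_apply, ContinuousLinearMap.one_apply,
        ContinuousLinearMap.add_apply, ContinuousLinearMap.smul_apply] at h0
      exact h0.symm
    have hWx : W z x = M z y - Complex.I • y := by
      rw [hWdef]
      simp only [ContinuousLinearMap.mul_apply, ContinuousLinearMap.sub_apply,
        ContinuousLinearMap.smul_apply, ContinuousLinearMap.one_apply]
      rfl
    have him := im_inner_nonneg (hMpos z hz) y
    have hrein : RCLike.re ⟪M z y, Complex.I • y⟫_ℂ = (⟪y, M z y⟫_ℂ).im := by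
      have h7 : ⟪M z y, Complex.I • y⟫_ℂ = Complex.I * (starRingEnd ℂ) ⟪y, M z y⟫_ℂ := by
        rw [inner_smul_right, inner_conj_symm]
      rw [h7]
      simp only [RCLike.re_to_complex, Complex.mul_re, Complex.I_re, Complex.I_im,
        Complex.conj_re, Complex.conj_im]
      ring
    have hsub : ‖M z y - Complex.I • y‖ ^ 2 ≤ ‖M z y + Complex.I • y‖ ^ 2 := by
      rw [norm_sub_sq (𝕜 := ℂ), norm_add_sq (𝕜 := ℂ), hrein]
      linarith
    calc ‖W z x‖ = ‖M z y - Complex.I • y‖ := by rw [hWx]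
    _ ≤ ‖M z y + Complex.I • y‖ :=
        le_of_pow_le_pow_left₀ two_ne_zero (norm_nonneg _) hsub
    _ = ‖x‖ := by rw [← hx]
  have hWdiffAt : ∀ z : ℂ, 0 < z.im → DifferentiableAt ℂ W z := by
    intro z hz
    have hMd' : DifferentiableAt ℂ M z := (hMd.differentiableAt (hopen.mem_nhds hz))
    have hTd : DifferentiableAt ℂ (fun w => M w + Complex.I • 1) z := hMd'.add_const _
    have hTid : DifferentiableAt ℂ Ti z := hTd.inverse (hTunit z hz)
    exact (hMd'.sub_const _).mul hTid
  have hWeq : ∀ z : ℂ, 0 < z.im → (1 : H →L[ℂ] H) + W z = (2 : ℂ) • (M z * Ti z) := by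
    intro z hz
    calc (1 : H →L[ℂ] H) + W z
        = (M z + Complex.I • 1) * Ti z + (M z - Complex.I • 1) * Ti z := by
          rw [hTi1 z hz, hWdef]
    _ = ((M z + Complex.I • 1) + (M z - Complex.I • 1)) * Ti z := (add_mul _ _ _).symm
    _ = ((2 : ℂ) • M z) * Ti z := by
          congr 1
          ext x
          simp [two_smul]
    _ = (2 : ℂ) • (M z * Ti z) := smul_mul_assoc _ _ _
  have hsmul_unit : ∀ (A : H →L[ℂ] H) (c : ℂ), c ≠ 0 → IsUnit A → IsUnit (c • A) := by
    intro A c hc hA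
    have h0 : c • A = (c • (1 : H →L[ℂ] H)) * A := by rw [smul_mul_assoc, one_mul]
    rw [h0]
    refine IsUnit.mul ?_ hA
    refine ⟨⟨c • 1, c⁻¹ • 1, ?_, ?_⟩, rfl⟩ <;>
      · ext x
        simp [smul_smul, hc, mul_inv_cancel₀, inv_mul_cancel₀]
  have hWz₀unit : IsUnit ((1 : H →L[ℂ] H) + W z₀) := by
    rw [hWeq z₀ hz₀]
    exact hsmul_unit _ _ two_ne_zero (hM₀.mul (isUnit_ringInverse.mpr (hTunit z₀ hz₀)))
  obtain ⟨u, hu⟩ := hWz₀unit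
  set c₀ : ℝ := (‖(↑u⁻¹ : H →L[ℂ] H)‖ + 1)⁻¹ with hc₀def
  have hc₀pos : 0 < c₀ := by positivity
  have hlow₀ : ∀ x : H, c₀ * ‖x‖ ≤ ‖((1 : H →L[ℂ] H) + W z₀) x‖ := by
    intro x
    have h1 : (↑u⁻¹ : H →L[ℂ] H) (((1 : H →L[ℂ] H) + W z₀) x) = x := by
      rw [← hu, ← ContinuousLinearMap.mul_apply, u.inv_mul, ContinuousLinearMap.one_apply]
    calc c₀ * ‖x‖ = c₀ * ‖(↑u⁻¹ : H →L[ℂ] H) (((1 : H →L[ℂ] H) + W z₀) x)‖ := by rw [h1]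
    _ ≤ c₀ * (‖(↑u⁻¹ : H →L[ℂ] H)‖ * ‖((1 : H →L[ℂ] H) + W z₀) x‖) :=
        mul_le_mul_of_nonneg_left (ContinuousLinearMap.le_opNorm _ _) hc₀pos.le
    _ ≤ ‖((1 : H →L[ℂ] H) + W z₀) x‖ := by
        rw [hc₀def, ← mul_assoc]
        have hle : (‖(↑u⁻¹ : H →L[ℂ] H)‖ + 1)⁻¹ * ‖(↑u⁻¹ : H →L[ℂ] H)‖ ≤ 1 := by
          rw [inv_mul_le_iff₀ (by positivity)]
          linarith
        nlinarith [norm_nonneg (((1 : H →L[ℂ] H) + W z₀) x)]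
  intro z hz
  obtain ⟨C, hCpos, hC⟩ := halfplane_harnack z₀ z hz₀ hz
  set β : ℝ := c₀ ^ 2 / (2 * C) with hβdef
  have hβpos : 0 < β := by positivity
  have hβle : ∀ x : H, ‖x‖ = 1 →
      β ≤ ‖⟪x, ((1 : H →L[ℂ] H) + W z) x⟫_ℂ‖ := by
    intro x hx
    set h : ℂ → ℂ := fun w => 1 + ⟪x, W w x⟫_ℂ with hhdef
    have hhdiff : DifferentiableOn ℂ h {w : ℂ | 0 < w.im} := by
      intro w hw
      apply DifferentiableAt.differentiableWithinAt
      apply DifferentiableAt.const_add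
      exact ((innerSL ℂ x).differentiableAt.comp w
        ((ContinuousLinearMap.apply ℂ H x).differentiableAt.comp w (hWdiffAt w hw)))
    have hWx1 : ∀ w : ℂ, 0 < w.im → ‖⟪x, W w x⟫_ℂ‖ ≤ 1 := by
      intro w hw
      calc ‖⟪x, W w x⟫_ℂ‖ ≤ ‖x‖ * ‖W w x‖ := norm_inner_le_norm _ _
      _ ≤ ‖x‖ * ‖x‖ := mul_le_mul_of_nonneg_left (hWnorm w hw x) (norm_nonneg _)
      _ = 1 := by rw [hx]; ring
    have hhre : ∀ w : ℂ, 0 < w.im → 0 ≤ (h w).re := by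
      intro w hw
      have h1 : |(⟪x, W w x⟫_ℂ).re| ≤ 1 := (Complex.abs_re_le_norm _).trans (hWx1 w hw)
      have h2 := abs_le.mp h1
      simp only [hhdef, Complex.add_re, Complex.one_re]
      linarith [h2.1]
    have hSx : ‖((1 : H →L[ℂ] H) + W z₀) x‖ ^ 2 ≤ 2 * (h z₀).re := by
      have hexp : ((1 : H →L[ℂ] H) + W z₀) x = x + W z₀ x := by
        simp
      rw [hexp, norm_add_sq (𝕜 := ℂ)]
      have h2 : ‖W z₀ x‖ ≤ 1 := (hWnorm z₀ hz₀ x).trans_eq hx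
      have h3 : (h z₀).re = 1 + (⟪x, W z₀ x⟫_ℂ).re := by
        simp [hhdef]
      have h4 : RCLike.re ⟪x, W z₀ x⟫_ℂ = (⟪x, W z₀ x⟫_ℂ).re := rfl
      rw [hx, h3, h4]
      nlinarith [norm_nonneg (W z₀ x)]
    have hhz₀ : c₀ ^ 2 / 2 ≤ (h z₀).re := by
      have h5 := hlow₀ x
      rw [hx, mul_one] at h5
      nlinarith [norm_nonneg (((1 : H →L[ℂ] H) + W z₀) x)]
    have habs₀ : c₀ ^ 2 / 2 ≤ ‖h z₀‖ :=
      hhz₀.trans ((Complex.re_le_norm _))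
    have hCbound := hC h hhdiff hhre
    have hend : ⟪x, ((1 : H →L[ℂ] H) + W z) x⟫_ℂ = h z := by
      have hxx : ⟪x, x⟫_ℂ = 1 := by
        rw [inner_self_eq_norm_sq_to_K, hx]
        norm_num
      simp only [hhdef, ContinuousLinearMap.add_apply, ContinuousLinearMap.one_apply,
        inner_add_right, hxx]
    rw [hend, hβdef, div_le_iff₀ (by positivity)]
    nlinarith [norm_nonneg (h z), norm_nonneg (h z₀)]
  have hWzunit : IsUnit ((1 : H →L[ℂ] H) + W z) := by
    apply isUnit_of_inner_lower _ β hβpos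
    intro x
    rcases eq_or_ne x 0 with rfl | hx0
    · simp
    · have hn : ‖x‖ ≠ 0 := norm_ne_zero_iff.mpr hx0
      set v : H := ((‖x‖ : ℂ))⁻¹ • x with hvdef
      have hvnorm : ‖v‖ = 1 := by
        rw [hvdef, norm_smul, norm_inv, Complex.norm_real, Real.norm_eq_abs,
          _root_.abs_of_nonneg (norm_nonneg x)]
        field_simp
      have hxv : x = ((‖x‖ : ℂ)) • v := by
        rw [hvdef, smul_smul, mul_inv_cancel₀ (by exact_mod_cast hn), one_smul]
      have hinner2 : ⟪x, ((1 : H →L[ℂ] H) + W z) x⟫_ℂ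
          = (‖x‖ : ℂ) ^ 2 * ⟪v, ((1 : H →L[ℂ] H) + W z) v⟫_ℂ := by
        conv_lhs => rw [hxv]
        rw [ContinuousLinearMap.map_smul, inner_smul_left, inner_smul_right]
        rw [Complex.conj_ofReal]
        ring
      rw [hinner2, norm_mul]
      have habsn : ‖(‖x‖ : ℂ) ^ 2‖ = ‖x‖ ^ 2 := by
        rw [norm_pow, Complex.norm_real, Real.norm_eq_abs, _root_.abs_of_nonneg (norm_nonneg x)]
      rw [habsn]
      have := hβle v hvnorm
      nlinarith [sq_nonneg ‖x‖, norm_nonneg x]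
  have hMzeq : M z = (2⁻¹ : ℂ) • (((1 : H →L[ℂ] H) + W z) * (M z + Complex.I • 1)) := by
    have h6 : ((1 : H →L[ℂ] H) + W z) * (M z + Complex.I • 1) = (2 : ℂ) • M z := by
      rw [hWeq z hz, smul_mul_assoc, mul_assoc, hTi2 z hz, mul_one]
    rw [h6, smul_smul]
    norm_num
  rw [hMzeq]
  exact hsmul_unit _ _ (by norm_num) (hWzunit.mul (hTunit z hz))

end SpectralShift
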